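/- Suppose λ₁, λ₂, λ₃, λ₄ ∈ A satisfy the Cayley–Hamilton relation ∏_{i=1}^{4} (E − λᵢ • e) = 0 in L (product with respect to ∘). Assume moreover that λᵢ − λⱼ is a unit of A for all i ≠ j, and that the elements e, E, E², E³ are linearly independent over A. Then the eigenvalue functions satisfy the system of differential equations δ(E^k)(λᵢ) = λᵢ^k for every integer k ≥ 1 and every i ∈ {1,2,3,4}. -/

import Mathlib

open Finset

/-- `P_U(V,W) := [U, V∘W] − [U,V]∘W − V∘[U,W]`, where the ring multiplication plays
the role of `∘` and `br` is the Lie bracket. -/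
def Pform {L : Type*} [Mul L] [Sub L] (br : L → L → L) (U V W : L) : L :=
  br U (V * W) - br U V * W - V * br U W

section Aux



open Polynomial

lemma poly_bridge {A L : Type*} [CommRing A] [CommRing L] [Algebra A L]
    (E : L) (p : A[X]) (hmp : p.Monic) (hdeg : p.natDegree = 4)
    (hpE : aeval E p = 0)
    (hli : LinearIndependent A (fun i : Fin 4 => E ^ (i : ℕ)))
    (q : A[X]) (hq : aeval E q = 0) : p ∣ q := by
  have hp1 : p ≠ 1 := by
    intro h; rw [h] at hdeg; simp at hdeg
  have hr : (q %ₘ p).natDegree < 4 :=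
    hdeg ▸ Polynomial.natDegree_modByMonic_lt q hmp hp1
  have haev : aeval E (q %ₘ p) = 0 := by
    have h := congrArg (aeval E (R := A)) (Polynomial.modByMonic_add_div q p)
    rw [map_add, map_mul, hpE, zero_mul, add_zero, hq] at h
    exact h
  have hsum : ∑ i : Fin 4, (q %ₘ p).coeff (i : ℕ) • E ^ (i : ℕ) = 0 := by
    rw [Fin.sum_univ_eq_sum_range (fun j => (q %ₘ p).coeff j • E ^ j) 4,
      ← Polynomial.aeval_eq_sum_range' hr, haev]
  have hcoe := Fintype.linearIndependent_iff.mp hli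
    (fun i : Fin 4 => (q %ₘ p).coeff (i : ℕ)) hsum
  have hr0 : q %ₘ p = 0 := by
    apply Polynomial.ext
    intro n
    by_cases hn : n < 4
    · simpa using hcoe ⟨n, hn⟩
    · simp [Polynomial.coeff_eq_zero_of_natDegree_lt (lt_of_lt_of_le hr (le_of_not_gt hn))]
  exact (Polynomial.modByMonic_eq_zero_iff_dvd hmp).mp hr0
open Polynomial


lemma euler_aux {A L : Type*} [CommRing A] [CommRing L] [Algebra A L] (br : L → L → L)
    (hadd_left : ∀ x y z : L, br (x + y) z = br x z + br y z)
    (hadd_right : ∀ x y z : L, br x (y + z) = br x y + br x z)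
    (halt : ∀ x : L, br x x = 0)
    (δ : L → A → A)
    (hLeib : ∀ (V W : L) (a : A), br V (a • W) = a • br V W + δ V a • W)
    (hF : ∀ U V W Z : L,
      Pform br (U * V) W Z = U * Pform br V W Z + V * Pform br U W Z)
    (E : L) (hE : ∀ V W : L, Pform br E V W = V * W)
    (a b c d : A)
    (hCH : (E - algebraMap A L a) * (E - algebraMap A L b) * (E - algebraMap A L c)
        * (E - algebraMap A L d) = 0)
    (hu1 : IsUnit (a - b)) (hu2 : IsUnit (a - c)) (hu3 : IsUnit (a - d))
    (hli : LinearIndependent A (fun i : Fin 4 => E ^ (i : ℕ))) :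
    ∀ m : ℕ, δ (E ^ (m + 1)) a = a ^ (m + 1) := by
  rcases subsingleton_or_nontrivial A with hA | hA
  · exact fun m => Subsingleton.elim _ _
  have brz : ∀ x : L, br x 0 = 0 := by
    intro x
    have h := hadd_right x 0 0
    rw [add_zero] at h
    exact left_eq_add.mp h
  have brsub : ∀ x y z : L, br x (y - z) = br x y - br x z := by
    intro x y z
    have h := hadd_right x (y - z) z
    rw [show y - z + z = y from by ring] at h
    linear_combination -h
  have antisym : ∀ x y : L, br x y = -br y x := by
    intro x y
    have h := halt (x + y)
    rw [hadd_left, hadd_right, hadd_right, halt x, halt y] at h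
    linear_combination h
  have pf : ∀ (m : ℕ) (V W : L),
      Pform br (E ^ (m + 1)) V W = ((m : L) + 1) * (E ^ m * (V * W)) := by
    intro m
    induction m with
    | zero => intro V W; simpa using hE V W
    | succ n ih =>
      intro V W
      have h := hF E (E ^ (n + 1)) V W
      rw [ih, hE] at h
      rw [show E ^ (n + 1 + 1) = E * E ^ (n + 1) from pow_succ' E (n + 1), h]
      push_cast
      ring
  have prodrule : ∀ (m : ℕ) (V W : L),
      br (E ^ (m + 1)) (V * W) = br (E ^ (m + 1)) V * W + V * br (E ^ (m + 1)) W
        + ((m : L) + 1) * (E ^ m * (V * W)) := by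
    intro m V W
    have h := pf m V W
    simp only [Pform] at h
    linear_combination h
  have hU1 : ∀ m : ℕ, br (E ^ (m + 1)) 1 = -(((m : L) + 1) * E ^ m) := by
    intro m
    have h := pf m 1 1
    simp only [Pform, mul_one, one_mul] at h
    linear_combination -h
  have hEE : ∀ m : ℕ, br E (E ^ m) = ((m : L) - 1) * E ^ m := by
    intro m
    induction m with
    | zero => simpa using hU1 0
    | succ n ih =>
      have h := hE E (E ^ n)
      simp only [Pform] at h
      rw [halt E, ih] at h
      rw [show E ^ (n + 1) = E * E ^ n from pow_succ' E n]
      push_cast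
      linear_combination h
  have hUE : ∀ m : ℕ, br (E ^ (m + 1)) E = -((m : L) * E ^ (m + 1)) := by
    intro m
    rw [antisym, hEE (m + 1)]
    push_cast
    ring
  intro m
  have hι : ∀ t : A, br (E ^ (m + 1)) (algebraMap A L t)
      = algebraMap A L t * (-(((m : L) + 1) * E ^ m))
        + algebraMap A L (δ (E ^ (m + 1)) t) := by
    intro t
    have h := hLeib (E ^ (m + 1)) 1 t
    simp only [Algebra.smul_def, mul_one] at h
    rw [hU1 m] at h
    exact h
  have hD : ∀ t : A, br (E ^ (m + 1)) (E - algebraMap A L t)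
      = -((m : L) * E ^ (m + 1)) + ((m : L) + 1) * (algebraMap A L t * E ^ m)
        - algebraMap A L (δ (E ^ (m + 1)) t) := by
    intro t
    rw [brsub, hUE m, hι t]
    ring
  have hbig : br (E ^ (m + 1)) ((E - algebraMap A L a) * (E - algebraMap A L b)
      * (E - algebraMap A L c) * (E - algebraMap A L d)) = 0 := by
    rw [hCH]; exact brz _
  rw [prodrule m ((E - algebraMap A L a) * (E - algebraMap A L b) * (E - algebraMap A L c))
        (E - algebraMap A L d),
      prodrule m ((E - algebraMap A L a) * (E - algebraMap A L b)) (E - algebraMap A L c),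
      prodrule m (E - algebraMap A L a) (E - algebraMap A L b),
      hD a, hD b, hD c, hD d] at hbig
  -- polynomial setup
  set da := δ (E ^ (m + 1)) a with hda
  set db := δ (E ^ (m + 1)) b with hdb
  set dc := δ (E ^ (m + 1)) c with hdc
  set dd := δ (E ^ (m + 1)) d with hdd
  set p : A[X] := (X - C a) * (X - C b) * (X - C c) * (X - C d) with hp
  have hmp : p.Monic :=
    (((monic_X_sub_C a).mul (monic_X_sub_C b)).mul (monic_X_sub_C c)).mul (monic_X_sub_C d)
  have hdeg : p.natDegree = 4 := by
    rw [hp,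
      Monic.natDegree_mul (((monic_X_sub_C a).mul (monic_X_sub_C b)).mul (monic_X_sub_C c))
        (monic_X_sub_C d),
      Monic.natDegree_mul ((monic_X_sub_C a).mul (monic_X_sub_C b)) (monic_X_sub_C c),
      Monic.natDegree_mul (monic_X_sub_C a) (monic_X_sub_C b)]
    simp [natDegree_X_sub_C]
  have hpE : aeval E p = 0 := by
    rw [hp]
    simp only [map_mul, map_sub, aeval_X, aeval_C]
    exact hCH
  set q : A[X] :=
      (C (1 - ((m : A) + 1)) * X ^ (m + 1) + C (((m : A) + 1) * a) * X ^ m - C da)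
        * ((X - C b) * (X - C c) * (X - C d))
    + (C (1 - ((m : A) + 1)) * X ^ (m + 1) + C (((m : A) + 1) * b) * X ^ m - C db)
        * ((X - C a) * (X - C c) * (X - C d))
    + (C (1 - ((m : A) + 1)) * X ^ (m + 1) + C (((m : A) + 1) * c) * X ^ m - C dc)
        * ((X - C a) * (X - C b) * (X - C d))
    + (C (1 - ((m : A) + 1)) * X ^ (m + 1) + C (((m : A) + 1) * d) * X ^ m - C dd)
        * ((X - C a) * (X - C b) * (X - C c)) with hq
  have hqE : aeval E q = 0 := by
    rw [hq]
    simp only [map_add, map_mul, map_sub, map_pow, aeval_X, aeval_C, map_one, map_natCast]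
    linear_combination hbig - (3 * ((m : L) + 1) * E ^ m) * hCH
  obtain ⟨s, hs⟩ := poly_bridge E p hmp hdeg hpE hli q hqE
  have h0 : Polynomial.eval a q = 0 := by
    rw [hs, hp]
    simp [eval_mul, eval_sub, eval_X, eval_C, sub_self]
  rw [hq] at h0
  simp only [eval_add, eval_mul, eval_sub, eval_pow, eval_X, eval_C] at h0
  have h1 : (a ^ (m + 1) - da) * ((a - b) * (a - c) * (a - d)) = 0 := by
    linear_combination h0
  have hu : IsUnit ((a - b) * (a - c) * (a - d)) := (hu1.mul hu2).mul hu3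
  have h2 := (hu.mul_left_eq_zero).mp h1
  linear_combination -h2

end Aux

/-- if `λ₁,…,λ₄ ∈ A` satisfy the Cayley–Hamilton relation
`∏ᵢ (E − λᵢ • e) = 0`, the differences `λᵢ − λⱼ` (`i ≠ j`) are units of `A`, and
`e, E, E², E³` are linearly independent over `A`, then the eigenvalue functions satisfy the
system of ODEs `δ(E^k)(λᵢ) = λᵢ^k` for all `k ≥ 1` and all `i`. -/
theorem euler_eigenvalue_ode {A L : Type*} [CommRing A] [CommRing L]
    [Algebra A L] (br : L → L → L)
    (hadd_left : ∀ x y z : L, br (x + y) z = br x z + br y z)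
    (hadd_right : ∀ x y z : L, br x (y + z) = br x y + br x z)
    (halt : ∀ x : L, br x x = 0)
    (hjacobi : ∀ x y z : L, br x (br y z) + br y (br z x) + br z (br x y) = 0)
    (δ : L → A → A)
    (hLeib : ∀ (V W : L) (a : A), br V (a • W) = a • br V W + δ V a • W)
    (hF : ∀ U V W Z : L,
      Pform br (U * V) W Z = U * Pform br V W Z + V * Pform br U W Z)
    (E : L) (hE : ∀ V W : L, Pform br E V W = V * W)
    (lam : Fin 4 → A)
    (hCH : ∏ i : Fin 4, (E - lam i • (1 : L)) = 0)
    (hunit : ∀ i j : Fin 4, i ≠ j → IsUnit (lam i - lam j))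
    (hli : LinearIndependent A (fun i : Fin 4 => E ^ (i : ℕ))) :
    ∀ k : ℕ, 1 ≤ k → ∀ i : Fin 4, δ (E ^ k) (lam i) = lam i ^ k := by
  intro k hk i
  obtain ⟨m, rfl⟩ : ∃ m, k = m + 1 := ⟨k - 1, (Nat.succ_pred_eq_of_pos hk).symm⟩
  rw [Fin.prod_univ_four] at hCH
  simp only [← Algebra.algebraMap_eq_smul_one] at hCH
  fin_cases i
  · exact euler_aux br hadd_left hadd_right halt δ hLeib hF E hE (lam 0) (lam 1) (lam 2) (lam 3)
      hCH (hunit 0 1 (by decide)) (hunit 0 2 (by decide)) (hunit 0 3 (by decide)) hli m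
  · exact euler_aux br hadd_left hadd_right halt δ hLeib hF E hE (lam 1) (lam 0) (lam 2) (lam 3)
      (by linear_combination hCH) (hunit 1 0 (by decide)) (hunit 1 2 (by decide))
      (hunit 1 3 (by decide)) hli m
  · exact euler_aux br hadd_left hadd_right halt δ hLeib hF E hE (lam 2) (lam 0) (lam 1) (lam 3)
      (by linear_combination hCH) (hunit 2 0 (by decide)) (hunit 2 1 (by decide))
      (hunit 2 3 (by decide)) hli m
  · exact euler_aux br hadd_left hadd_right halt δ hLeib hF E hE (lam 3) (lam 0) (lam 1) (lam 2)
      (by linear_combination hCH) (hunit 3 0 (by decide)) (hunit 3 1 (by decide))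
      (hunit 3 2 (by decide)) hli m
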